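/- arXiv:2010.15968 — 2 statements merged into one kernel-verified Lean document; each statement's English description precedes it below -/
import Mathlib

section
/- Let ρ be a density matrix on C^{D_v}⊗C^{D_h} satisfying a volume-law bound: |S(Tr_h ρ) − log D_v| ≤ c·D_v/D_h for a constant c > 0. Then for any Hermitian D_v×D_v matrix O, |Tr((O ⊗ I_{D_h})·(ρ − I/(D_v·D_h)))| ≤ ‖O‖_∞ · √(2·c·D_v/D_h). -/
open Matrix BigOperators
open scoped ComplexOrder Kronecker

/-- The operator norm (largest singular value) of a complex square matrix, realized as the
norm of the induced operator on Euclidean space. -/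
noncomputable def opNorm {n : Type*} [Fintype n] [DecidableEq n] (A : Matrix n n ℂ) : ℝ :=
  ‖Matrix.toEuclideanCLM (𝕜 := ℂ) A‖

/-- The von Neumann entropy `∑ i, -λ i * log (λ i)` of a matrix, computed from its
eigenvalues when it is Hermitian (and `0` otherwise). -/
noncomputable def vNEntropy {n : Type*} [Fintype n] [DecidableEq n] (σ : Matrix n n ℂ) : ℝ :=
  if h : σ.IsHermitian then ∑ i, Real.negMulLog (h.eigenvalues i) else 0

/-- Partial trace over the hidden (second) tensor factor. -/
noncomputable def trH {Dv Dh : ℕ} (M : Matrix (Fin Dv × Fin Dh) (Fin Dv × Fin Dh) ℂ) :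
    Matrix (Fin Dv) (Fin Dv) ℂ :=
  Matrix.of fun p v => ∑ q, M (p, q) (v, q)

/-- derivative fact: `(x+1) log x - 2(x-1)` is monotone on `(0, ∞)`. -/
lemma aux_g_mono : MonotoneOn (fun x : ℝ => (x + 1) * Real.log x - 2 * (x - 1)) (Set.Ioi 0) := by
  have hderiv : ∀ x ∈ Set.Ioi (0:ℝ),
      HasDerivAt (fun x : ℝ => (x + 1) * Real.log x - 2 * (x - 1))
        (Real.log x + (x + 1) * x⁻¹ - 2) x := by
    intro x hx
    have hx0 : x ≠ 0 := ne_of_gt hx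
    have h1 : HasDerivAt (fun x : ℝ => (x + 1) * Real.log x)
        (1 * Real.log x + (x + 1) * x⁻¹) x :=
      (((hasDerivAt_id x).add_const 1).mul (Real.hasDerivAt_log hx0))
    have h2 : HasDerivAt (fun x : ℝ => 2 * (x - 1)) 2 x := by
      simpa using ((hasDerivAt_id x).sub_const 1).const_mul 2
    exact (h1.sub h2).congr_deriv (by ring)
  apply monotoneOn_of_deriv_nonneg (convex_Ioi 0)
  · exact fun x hx => ((hderiv x hx).continuousAt).continuousWithinAt
  · intro x hx
    rw [interior_Ioi] at hx
    exact ((hderiv x hx).differentiableAt).differentiableWithinAt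
  · intro x hx
    rw [interior_Ioi] at hx
    rw [(hderiv x hx).deriv]
    have hlog : 1 - x⁻¹ ≤ Real.log x := Real.one_sub_inv_le_log_of_pos hx
    have hx0 : x ≠ 0 := ne_of_gt hx
    have : (x + 1) * x⁻¹ = 1 + x⁻¹ := by field_simp
    rw [this]; linarith

lemma aux_g_nonneg {x : ℝ} (hx : 1 ≤ x) : 0 ≤ (x + 1) * Real.log x - 2 * (x - 1) := by
  have := aux_g_mono (Set.mem_Ioi.2 one_pos) (Set.mem_Ioi.2 (lt_of_lt_of_le one_pos hx)) hx
  simpa using this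

lemma aux_g_nonpos {x : ℝ} (hx0 : 0 < x) (hx : x ≤ 1) :
    (x + 1) * Real.log x - 2 * (x - 1) ≤ 0 := by
  have := aux_g_mono (Set.mem_Ioi.2 hx0) (Set.mem_Ioi.2 one_pos) hx
  simpa using this

/-- Key pointwise inequality: `3(x-1)² ≤ 2(x+2)(x log x - x + 1)` for `x ≥ 0`. -/
lemma aux_key (x : ℝ) (hx : 0 ≤ x) :
    3 * (x - 1) ^ 2 ≤ 2 * (x + 2) * (x * Real.log x - x + 1) := by
  set F : ℝ → ℝ := fun x => 2 * (x + 2) * (x * Real.log x - x + 1) - 3 * (x - 1) ^ 2 with hF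
  have hFcont : Continuous F := by
    have : Continuous fun x : ℝ => x * Real.log x := Real.continuous_mul_log
    fun_prop
  have hderiv : ∀ x : ℝ, 0 < x → HasDerivAt F
      (4 * ((x + 1) * Real.log x - 2 * (x - 1))) x := by
    intro x hx0
    have h1 : HasDerivAt (fun x : ℝ => x * Real.log x) (Real.log x + 1) x :=
      Real.hasDerivAt_mul_log (ne_of_gt hx0)
    have h2 : HasDerivAt (fun x : ℝ => x * Real.log x - x + 1) (Real.log x + 1 - 1) x := by
      simpa using (h1.sub (hasDerivAt_id x)).add_const 1
    have h3 : HasDerivAt (fun x : ℝ => 2 * (x + 2)) 2 x := by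
      simpa using ((hasDerivAt_id x).add_const 2).const_mul 2
    have h4 : HasDerivAt (fun x : ℝ => 2 * (x + 2) * (x * Real.log x - x + 1))
        (2 * (x * Real.log x - x + 1) + 2 * (x + 2) * (Real.log x + 1 - 1)) x :=
      h3.mul h2
    have h5 : HasDerivAt (fun x : ℝ => 3 * (x - 1) ^ 2) (3 * (2 * (x - 1))) x := by
      have := (((hasDerivAt_id x).sub_const 1).pow 2).const_mul 3
      simpa using this
    have h6 := h4.sub h5
    exact h6.congr_deriv (by ring)
  -- value at 1 is 0
  have hF1 : F 1 = 0 := by simp [hF]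
  rcases eq_or_lt_of_le hx with h0 | hx0
  · -- x = 0
    have : F 0 = 1 := by norm_num [hF]
    simp only [hF] at this ⊢
    rw [← h0]; linarith
  rcases le_total x 1 with hle | hge
  · -- antitone on (0, 1]
    have hanti : AntitoneOn F (Set.Ioc 0 1) := by
      apply antitoneOn_of_deriv_nonpos (convex_Ioc 0 1) hFcont.continuousOn
      · intro y hy
        rw [interior_Ioc] at hy
        exact ((hderiv y hy.1).differentiableAt).differentiableWithinAt
      · intro y hy
        rw [interior_Ioc] at hy
        rw [(hderiv y hy.1).deriv]
        have := aux_g_nonpos hy.1 (le_of_lt hy.2)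
        linarith
    have := hanti (Set.mem_Ioc.2 ⟨hx0, hle⟩) (Set.mem_Ioc.2 ⟨one_pos, le_refl 1⟩) hle
    rw [hF1] at this
    simpa [hF] using this
  · -- monotone on [1, ∞)
    have hmono : MonotoneOn F (Set.Ici 1) := by
      apply monotoneOn_of_deriv_nonneg (convex_Ici 1) hFcont.continuousOn
      · intro y hy
        rw [interior_Ici] at hy
        exact ((hderiv y (lt_trans one_pos hy)).differentiableAt).differentiableWithinAt
      · intro y hy
        rw [interior_Ici] at hy
        rw [(hderiv y (lt_trans one_pos hy)).deriv]
        have := aux_g_nonneg (le_of_lt hy)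
        linarith
    have := hmono (Set.mem_Ici.2 (le_refl 1)) (Set.mem_Ici.2 hge) hge
    rw [hF1] at this
    simpa [hF] using this

/-- Scaled pointwise inequality with a reference weight `q > 0`. -/
lemma aux_key_scaled (t q : ℝ) (ht : 0 ≤ t) (hq : 0 < q) :
    3 * (t - q) ^ 2 ≤ 2 * (t + 2 * q) * (t * Real.log t - t * Real.log q - t + q) := by
  rcases eq_or_lt_of_le ht with h0 | ht0
  · rw [← h0]; simp; nlinarith [sq_nonneg q]
  · have hx : (0:ℝ) ≤ t / q := le_of_lt (div_pos ht0 hq)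
    have h := aux_key (t / q) hx
    have hlog : Real.log (t / q) = Real.log t - Real.log q :=
      Real.log_div (ne_of_gt ht0) (ne_of_gt hq)
    have hq2 : (0:ℝ) < q ^ 2 := by positivity
    have := mul_le_mul_of_nonneg_left h (le_of_lt hq2)
    rw [hlog] at this
    have ht' : t / q * q = t := div_mul_cancel₀ t (ne_of_gt hq)
    calc 3 * (t - q) ^ 2 = q ^ 2 * (3 * (t / q - 1) ^ 2) := by
          field_simp; try ring
      _ ≤ q ^ 2 * (2 * (t / q + 2) * (t / q * (Real.log t - Real.log q) - t / q + 1)) := this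
      _ = 2 * (t + 2 * q) * (t * Real.log t - t * Real.log q - t + q) := by
          field_simp; try ring

lemma aux_phi_nonneg (t q : ℝ) (ht : 0 ≤ t) (hq : 0 < q) :
    0 ≤ t * Real.log t - t * Real.log q - t + q := by
  have h := aux_key_scaled t q ht hq
  nlinarith [sq_nonneg (t - q)]

/-- Pointwise bound `|t - q| ≤ √((2/3)(t+2q)) · √(KL term)`. -/
lemma aux_pointwise (t q : ℝ) (ht : 0 ≤ t) (hq : 0 < q) :
    |t - q| ≤ Real.sqrt (2 / 3 * (t + 2 * q)) *
      Real.sqrt (t * Real.log t - t * Real.log q - t + q) := by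
  rw [← Real.sqrt_mul (by positivity), ← Real.sqrt_sq_eq_abs]
  apply Real.sqrt_le_sqrt
  have h := aux_key_scaled t q ht hq
  nlinarith

/-- Pinsker's inequality against the uniform distribution. -/
lemma pinsker_uniform {n : ℕ} (hn : 0 < n) (p : Fin n → ℝ) (hp : ∀ i, 0 ≤ p i)
    (hsum : ∑ i, p i = 1) :
    ∑ i, |p i - (n : ℝ)⁻¹| ≤
      Real.sqrt (2 * (Real.log n - ∑ i, Real.negMulLog (p i))) := by
  set q : ℝ := (n : ℝ)⁻¹ with hqdef
  have hq : 0 < q := by positivity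
  set KL : ℝ := Real.log n - ∑ i, Real.negMulLog (p i) with hKL
  -- KL as a sum of nonnegative terms
  have hKLsum : KL = ∑ i, (p i * Real.log (p i) - p i * Real.log q - p i + q) := by
    have hlogq : Real.log q = -Real.log n := by
      rw [hqdef, Real.log_inv]
    have hsq : ∑ _i : Fin n, q = 1 := by
      rw [Finset.sum_const, Finset.card_univ, Fintype.card_fin, nsmul_eq_mul, hqdef]
      field_simp
    rw [hKL, Finset.sum_add_distrib, Finset.sum_sub_distrib, Finset.sum_sub_distrib,
      ← Finset.sum_mul, hsum, hsq, hlogq]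
    simp [Real.negMulLog, Finset.sum_neg_distrib]
    ring
  have step1 : ∑ i, |p i - q| ≤
      Real.sqrt (∑ i, 2 / 3 * (p i + 2 * q)) * Real.sqrt (∑ i,
        (p i * Real.log (p i) - p i * Real.log q - p i + q)) := by
    calc ∑ i, |p i - q| ≤ ∑ i, Real.sqrt (2 / 3 * (p i + 2 * q)) *
          Real.sqrt (p i * Real.log (p i) - p i * Real.log q - p i + q) :=
        Finset.sum_le_sum fun i _ => aux_pointwise (p i) q (hp i) hq
      _ ≤ _ := Real.sum_sqrt_mul_sqrt_le _ (fun i => by have := hp i; positivity)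
          (fun i => aux_phi_nonneg (p i) q (hp i) hq)
  have h23 : ∑ i : Fin n, 2 / 3 * (p i + 2 * q) = 2 := by
    rw [← Finset.mul_sum, Finset.sum_add_distrib, hsum, Finset.sum_const, Finset.card_univ,
      Fintype.card_fin, nsmul_eq_mul, hqdef]
    field_simp
    norm_num
  rw [h23, ← hKLsum] at step1
  calc ∑ i, |p i - q| ≤ Real.sqrt 2 * Real.sqrt KL := step1
    _ = Real.sqrt (2 * KL) := (Real.sqrt_mul (by norm_num) _).symm

/-- Trace of `(O ⊗ 1) M` equals trace of `O · trH M`. -/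
lemma trace_kron_eq {Dv Dh : ℕ} (O : Matrix (Fin Dv) (Fin Dv) ℂ)
    (M : Matrix (Fin Dv × Fin Dh) (Fin Dv × Fin Dh) ℂ) :
    ((O ⊗ₖ (1 : Matrix (Fin Dh) (Fin Dh) ℂ)) * M).trace = (O * trH M).trace := by
  simp only [Matrix.trace, Matrix.diag, Matrix.mul_apply, trH, Matrix.of_apply,
    Matrix.kroneckerMap_apply, Matrix.one_apply, Fintype.sum_prod_type,
    mul_ite, mul_one, mul_zero, ite_mul, zero_mul, Finset.sum_ite_eq, Finset.sum_ite_eq',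
    Finset.mem_univ, if_true, Finset.mul_sum]
  exact Finset.sum_congr rfl fun p _ => Finset.sum_comm

lemma trH_sub_smul_one {Dv Dh : ℕ} (ρ : Matrix (Fin Dv × Fin Dh) (Fin Dv × Fin Dh) ℂ) (s : ℂ) :
    trH (ρ - s • 1) = trH ρ - (s * Dh) • 1 := by
  ext p v
  simp only [trH, Matrix.of_apply, Matrix.sub_apply, Matrix.smul_apply, Matrix.one_apply,
    Finset.sum_sub_distrib, Matrix.sub_apply, Matrix.smul_apply, smul_eq_mul, Prod.mk.injEq]
  congr 1
  by_cases h : p = v <;> simp [h, Finset.sum_ite_eq, mul_comm]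

lemma trH_isHermitian {Dv Dh : ℕ} {ρ : Matrix (Fin Dv × Fin Dh) (Fin Dv × Fin Dh) ℂ}
    (hρ : ρ.IsHermitian) : (trH ρ).IsHermitian := by
  ext p v
  simp only [Matrix.conjTranspose_apply, trH, Matrix.of_apply, star_sum]
  congr 1; ext q
  exact congrFun (congrFun hρ (p, q)) (v, q)

lemma trH_posSemidef {Dv Dh : ℕ} {ρ : Matrix (Fin Dv × Fin Dh) (Fin Dv × Fin Dh) ℂ}
    (hρ : ρ.PosSemidef) : (trH ρ).PosSemidef := by
  refine Matrix.PosSemidef.of_dotProduct_mulVec_nonneg (trH_isHermitian hρ.1) fun x => ?_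
  have : dotProduct (star x) (trH ρ *ᵥ x) =
      ∑ q : Fin Dh, dotProduct (star fun (vw : Fin Dv × Fin Dh) =>
        if vw.2 = q then x vw.1 else 0) (ρ *ᵥ fun (vw : Fin Dv × Fin Dh) =>
        if vw.2 = q then x vw.1 else 0) := by
    simp only [dotProduct, Matrix.mulVec, dotProduct, Pi.star_apply, trH,
      Matrix.of_apply, Fintype.sum_prod_type, Finset.mul_sum, Finset.sum_mul,
      apply_ite (star (R := ℂ)), star_zero, mul_ite, mul_zero, ite_mul, zero_mul]
    calc ∑ p : Fin Dv, ∑ v : Fin Dv, ∑ q : Fin Dh, star (x p) * (ρ (p, q) (v, q) * x v)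
        = ∑ p : Fin Dv, ∑ q : Fin Dh, ∑ v : Fin Dv, star (x p) * (ρ (p, q) (v, q) * x v) :=
          Finset.sum_congr rfl fun p _ => Finset.sum_comm
      _ = ∑ q : Fin Dh, ∑ p : Fin Dv, ∑ v : Fin Dv, star (x p) * (ρ (p, q) (v, q) * x v) :=
          Finset.sum_comm
      _ = _ := by
          simp only [Finset.sum_ite_eq', Finset.mem_univ, if_true, Finset.sum_ite_irrel,
            Finset.sum_const_zero]
  rw [this]
  exact Finset.sum_nonneg fun q _ => hρ.dotProduct_mulVec_nonneg _

lemma trH_trace {Dv Dh : ℕ} (ρ : Matrix (Fin Dv × Fin Dh) (Fin Dv × Fin Dh) ℂ) :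
    (trH ρ).trace = ρ.trace := by
  simp [Matrix.trace, Matrix.diag, trH, Fintype.sum_prod_type]

set_option maxRecDepth 10000 in
lemma unitary_conj_diag_bound {n : ℕ} (U : Matrix.unitaryGroup (Fin n) ℂ)
    (O : Matrix (Fin n) (Fin n) ℂ) (i : Fin n) :
    ‖((star (U : Matrix (Fin n) (Fin n) ℂ) * O * (U : Matrix (Fin n) (Fin n) ℂ)) i i)‖
      ≤ ‖Matrix.toEuclideanCLM (𝕜 := ℂ) O‖ := by
  set Um : Matrix (Fin n) (Fin n) ℂ := (U : Matrix (Fin n) (Fin n) ℂ) with hUm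
  set u : EuclideanSpace ℂ (Fin n) := (WithLp.equiv 2 _).symm (fun a => Um a i) with hu
  set T := Matrix.toEuclideanCLM (𝕜 := ℂ) O with hT
  have hUU : star Um * Um = 1 := Matrix.UnitaryGroup.star_mul_self U
  have hsum1 : ∑ a, (starRingEnd ℂ) (Um a i) * Um a i = 1 := by
    have := congrFun (congrFun hUU i) i
    simpa [Matrix.mul_apply, Matrix.one_apply, Matrix.conjTranspose_apply] using this
  have hnormsq : ∑ a, ‖Um a i‖ ^ 2 = 1 := by
    have : ((∑ a, ‖Um a i‖ ^ 2 : ℝ) : ℂ) = 1 := by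
      push_cast
      rw [← hsum1]
      congr 1; ext a
      rw [mul_comm, Complex.mul_conj, Complex.normSq_eq_norm_sq]
      push_cast; ring
    exact_mod_cast this
  have hnu : ‖u‖ = 1 := by
    rw [EuclideanSpace.norm_eq]
    simp only [hu, WithLp.equiv_symm_apply]
    rw [hnormsq, Real.sqrt_one]
  have hentry : (star Um * O * Um) i i = inner ℂ u (T u) := by
    rw [hT, hu, WithLp.equiv_symm_apply, Matrix.toEuclideanCLM_toLp, EuclideanSpace.inner_toLp_toLp,
      mul_assoc]
    simp only [Matrix.mul_apply, Matrix.star_eq_conjTranspose, Matrix.conjTranspose_apply,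
      Matrix.toLin'_apply, dotProduct, Matrix.mulVec, Pi.star_apply]
    exact Finset.sum_congr rfl fun j _ => mul_comm _ _
  rw [hentry]
  calc ‖(inner ℂ u (T u) : ℂ)‖ ≤ ‖u‖ * ‖T u‖ := norm_inner_le_norm u (T u)
    _ ≤ ‖u‖ * (‖T‖ * ‖u‖) := by
        exact mul_le_mul_of_nonneg_left (T.le_opNorm u) (norm_nonneg u)
    _ = ‖T‖ := by rw [hnu]; ring

lemma spectral_trace {n : ℕ} (O σ : Matrix (Fin n) (Fin n) ℂ) (hσ : σ.IsHermitian) (s : ℂ) :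
    (O * (σ - s • 1)).trace =
      ∑ i, (star (hσ.eigenvectorUnitary : Matrix (Fin n) (Fin n) ℂ) * O *
          (hσ.eigenvectorUnitary : Matrix (Fin n) (Fin n) ℂ)) i i
        * ((hσ.eigenvalues i : ℂ) - s) := by
  set U : Matrix (Fin n) (Fin n) ℂ := (hσ.eigenvectorUnitary : Matrix (Fin n) (Fin n) ℂ) with hUdef
  have hU1 : U * star U = 1 := (Matrix.mem_unitaryGroup_iff).mp hσ.eigenvectorUnitary.2
  have hdecomp : σ - s • 1 = U * Matrix.diagonal (fun i => (hσ.eigenvalues i : ℂ) - s) * star U := by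
    have h1 : σ = U * Matrix.diagonal (fun i => (hσ.eigenvalues i : ℂ)) * star U := by
      exact hσ.spectral_theorem
    have h2 : s • (1 : Matrix (Fin n) (Fin n) ℂ) = U * Matrix.diagonal (fun _ => s) * star U := by
      rw [Matrix.smul_one_eq_diagonal]
      calc Matrix.diagonal (fun _ => s) = s • (1 : Matrix (Fin n) (Fin n) ℂ) :=
            (Matrix.smul_one_eq_diagonal s).symm
        _ = s • (U * star U) := by rw [hU1]
        _ = U * (s • (1 : Matrix (Fin n) (Fin n) ℂ)) * star U := by
            rw [Matrix.mul_smul, Matrix.smul_mul, mul_one]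
        _ = U * Matrix.diagonal (fun _ => s) * star U := by rw [Matrix.smul_one_eq_diagonal]
    conv_lhs => rw [h1, h2]
    rw [← Matrix.sub_mul, ← Matrix.mul_sub, Matrix.diagonal_sub]
  rw [hdecomp, ← mul_assoc, ← mul_assoc, Matrix.trace_mul_comm, ← mul_assoc, ← mul_assoc]
  simp [Matrix.trace, Matrix.diag, Matrix.mul_diagonal]

lemma sum_eigenvalues_eq_one {n : ℕ} {σ : Matrix (Fin n) (Fin n) ℂ} (hσ : σ.IsHermitian)
    (h1 : σ.trace = 1) : ∑ i, hσ.eigenvalues i = 1 := by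
  set U : Matrix (Fin n) (Fin n) ℂ := (hσ.eigenvectorUnitary : Matrix (Fin n) (Fin n) ℂ) with hUdef
  have hUU : star U * U = 1 := Matrix.UnitaryGroup.star_mul_self hσ.eigenvectorUnitary
  have hspec : σ = U * Matrix.diagonal (fun i => (hσ.eigenvalues i : ℂ)) * star U := by
    exact hσ.spectral_theorem
  have : σ.trace = ∑ i, (hσ.eigenvalues i : ℂ) := by
    conv_lhs => rw [hspec]
    rw [Matrix.trace_mul_cycle, hUU, one_mul, Matrix.trace_diagonal]
  rw [h1] at this
  have : ((∑ i, hσ.eigenvalues i : ℝ) : ℂ) = 1 := by push_cast; rw [this]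
  exact_mod_cast this

/-- volume-law case of Proposition 1: if a density matrix `ρ` obeys a
volume-law bound `|S(Tr_h ρ) - log Dv| ≤ c Dv / Dh`, then for every Hermitian visible
observable `O`, `|Tr((O ⊗ I)(ρ - I/(Dv·Dh)))| ≤ ‖O‖_∞ √(2 c Dv / Dh)`. -/
theorem volume_law_visible_observable_bound (Dv Dh : ℕ)
    (ρ : Matrix (Fin Dv × Fin Dh) (Fin Dv × Fin Dh) ℂ)
    (hρ : ρ.PosSemidef) (hρtr : ρ.trace = 1)
    (c : ℝ) (hc : 0 < c)
    (hvol : |vNEntropy (trH ρ) - Real.log Dv| ≤ c * Dv / Dh)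
    (O : Matrix (Fin Dv) (Fin Dv) ℂ) (hO : O.IsHermitian) :
    ‖((O ⊗ₖ (1 : Matrix (Fin Dh) (Fin Dh) ℂ)) *
        (ρ - (((Dv : ℂ) * (Dh : ℂ)))⁻¹ • 1)).trace‖ ≤
      opNorm O * Real.sqrt (2 * c * Dv / Dh) := by
  have hDv : Dv ≠ 0 := by rintro rfl; simp [Matrix.trace] at hρtr
  have hDh : Dh ≠ 0 := by rintro rfl; simp [Matrix.trace] at hρtr
  have hσpsd : (trH ρ).PosSemidef := trH_posSemidef hρ
  have hσ : (trH ρ).IsHermitian := hσpsd.1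
  have hσtr : (trH ρ).trace = 1 := by rw [trH_trace, hρtr]
  have hlam_nonneg : ∀ i, 0 ≤ hσ.eigenvalues i := fun i => hσpsd.eigenvalues_nonneg i
  have hlam_sum : ∑ i, hσ.eigenvalues i = 1 := sum_eigenvalues_eq_one hσ hσtr
  have hs : ((Dv : ℂ) * (Dh : ℂ))⁻¹ * (Dh : ℂ) = (Dv : ℂ)⁻¹ := by
    have h1 : (Dv : ℂ) ≠ 0 := Nat.cast_ne_zero.mpr hDv
    have h2 : (Dh : ℂ) ≠ 0 := Nat.cast_ne_zero.mpr hDh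
    field_simp
  have h1 : ((O ⊗ₖ (1 : Matrix (Fin Dh) (Fin Dh) ℂ)) *
      (ρ - (((Dv : ℂ) * (Dh : ℂ)))⁻¹ • 1)).trace
      = (O * (trH ρ - (Dv : ℂ)⁻¹ • 1)).trace := by
    rw [trace_kron_eq, trH_sub_smul_one, hs]
  rw [h1, spectral_trace O (trH ρ) hσ]
  have hOnn : (0:ℝ) ≤ opNorm O := norm_nonneg _
  have hB : ∀ i, ‖((star (hσ.eigenvectorUnitary : Matrix (Fin Dv) (Fin Dv) ℂ) * O *
      (hσ.eigenvectorUnitary : Matrix (Fin Dv) (Fin Dv) ℂ)) i i)‖ ≤ opNorm O :=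
    fun i => unitary_conj_diag_bound _ O i
  refine le_trans (norm_sum_le _ _) ?_
  have step : ∀ i, ‖((star (hσ.eigenvectorUnitary : Matrix (Fin Dv) (Fin Dv) ℂ) * O *
        (hσ.eigenvectorUnitary : Matrix (Fin Dv) (Fin Dv) ℂ)) i i * ((hσ.eigenvalues i : ℂ) - (Dv : ℂ)⁻¹))‖
      ≤ opNorm O * |hσ.eigenvalues i - (Dv : ℝ)⁻¹| := by
    intro i
    rw [norm_mul]
    have habs : ‖((hσ.eigenvalues i : ℂ) - (Dv : ℂ)⁻¹)‖ = |hσ.eigenvalues i - (Dv : ℝ)⁻¹| := by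
      rw [show ((hσ.eigenvalues i : ℂ) - (Dv : ℂ)⁻¹) = ((hσ.eigenvalues i - (Dv : ℝ)⁻¹ : ℝ) : ℂ) by
        push_cast; ring]
      exact (Complex.norm_real _).trans (Real.norm_eq_abs _)
    rw [habs]
    exact mul_le_mul_of_nonneg_right (hB i) (abs_nonneg _)
  refine le_trans (Finset.sum_le_sum fun i _ => step i) ?_
  rw [← Finset.mul_sum]
  refine mul_le_mul_of_nonneg_left ?_ hOnn
  have hpinsker := pinsker_uniform (Nat.pos_of_ne_zero hDv) hσ.eigenvalues hlam_nonneg hlam_sum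
  refine le_trans hpinsker ?_
  apply Real.sqrt_le_sqrt
  have hS : vNEntropy (trH ρ) = ∑ i, Real.negMulLog (hσ.eigenvalues i) := by
    unfold vNEntropy
    rw [dif_pos hσ]
  rw [hS] at hvol
  have h2 := (abs_le.mp hvol).1
  have : Real.log Dv - ∑ i, Real.negMulLog (hσ.eigenvalues i) ≤ c * Dv / Dh := by linarith
  calc 2 * (Real.log Dv - ∑ i, Real.negMulLog (hσ.eigenvalues i)) ≤ 2 * (c * Dv / Dh) := by
        linarith
    _ = 2 * c * Dv / Dh := by ring
end

section
/- Let φ = U·e₀ be a Haar-random unit vector in C^{D_v}⊗C^{D_h}. Then E[ ‖Tr_h |φ⟩⟨φ| − I/D_v‖₂² ] = (D_v + D_h)/(D_v·D_h + 1) − 1/D_v, and in particular E[ ‖Tr_h |φ⟩⟨φ| − I/D_v‖₂² ] ≤ 1/D_h, where ‖·‖₂ is the Frobenius norm. -/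
open Matrix BigOperators MeasureTheory
open scoped Kronecker

/-- The Borel/pi measurable-space structure on complex matrices. -/
noncomputable instance matrixMeasurableSpace {n m : Type*} : MeasurableSpace (Matrix n m ℂ) :=
  inferInstanceAs (MeasurableSpace (n → m → ℂ))

/-- The rank-one projector `|φ⟩⟨φ|` onto a vector `φ`. -/
noncomputable def proj {n : Type*} (φ : n → ℂ) : Matrix n n ℂ :=
  Matrix.of fun i j => φ i * star (φ j)

/-- The Frobenius (Hilbert–Schmidt) norm of a complex matrix. -/
noncomputable def frobNorm {n m : Type*} [Fintype n] [Fintype m] (A : Matrix n m ℂ) : ℝ :=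
  Real.sqrt (∑ i, ∑ j, ‖A i j‖ ^ 2)


section Aux
variable {ι : Type*} [Fintype ι] [DecidableEq ι]

lemma meas_entry (i j : ι) : Measurable (fun U : Matrix.unitaryGroup ι ℂ => (U : Matrix ι ι ℂ) i j) := by
  have h1 : Measurable (fun M : Matrix ι ι ℂ => M i j) :=
    (measurable_pi_apply j).comp (measurable_pi_apply i)
  exact h1.comp measurable_subtype_coe

lemma col_normSq (U : Matrix.unitaryGroup ι ℂ) (j : ι) :
    ∑ x, ‖(U : Matrix ι ι ℂ) x j‖^2 = 1 := by
  have hU : (star (U : Matrix ι ι ℂ) * (U : Matrix ι ι ℂ)) = 1 := U.2.1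
  have h := congrFun (congrFun hU j) j
  simp only [Matrix.mul_apply, Matrix.one_apply_eq, Matrix.star_apply] at h
  have h2 : ∀ z : ℂ, star z * z = ((‖z‖^2 : ℝ) : ℂ) := by
    intro z; rw [Complex.star_def, Complex.conj_mul']; norm_cast
  simp only [h2] at h
  have : ((∑ x, ‖(U : Matrix ι ι ℂ) x j‖^2 : ℝ) : ℂ) = ((1:ℝ):ℂ) := by
    push_cast; simpa using h
  exact_mod_cast this

lemma col_sum_one (U : Matrix.unitaryGroup ι ℂ) (j : ι) :
    ∑ x, (U : Matrix ι ι ℂ) x j * star ((U : Matrix ι ι ℂ) x j) = 1 := by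
  have h2 : ∀ z : ℂ, z * star z = ((‖z‖^2 : ℝ) : ℂ) := by
    intro z; rw [Complex.star_def, Complex.mul_conj']; norm_cast
  simp only [h2]
  rw [← Complex.ofReal_sum]
  rw [col_normSq U j]
  norm_num

lemma entry_norm_le (U : Matrix.unitaryGroup ι ℂ) (i j : ι) : ‖(U : Matrix ι ι ℂ) i j‖ ≤ 1 := by
  have h2 := col_normSq U j
  have h3 : ‖(U : Matrix ι ι ℂ) i j‖^2 ≤ 1 := by
    rw [← h2]
    exact Finset.single_le_sum (f := fun x => ‖(U : Matrix ι ι ℂ) x j‖^2)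
      (fun x _ => by positivity) (Finset.mem_univ i)
  nlinarith [norm_nonneg ((U : Matrix ι ι ℂ) i j)]


noncomputable def rc : ℂ := ((Real.sqrt 2 : ℝ) : ℂ)⁻¹

lemma rc_mul_rc : rc * rc = 2⁻¹ := by
  have h : ((Real.sqrt 2 : ℝ) : ℂ) * ((Real.sqrt 2 : ℝ) : ℂ) = 2 := by
    norm_cast
    rw [Real.mul_self_sqrt] <;> norm_num
  rw [rc, ← mul_inv, h]

lemma star_rc : star rc = rc := by
  rw [rc, ← Complex.ofReal_inv, Complex.star_def, Complex.conj_ofReal]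


lemma sum_split (a b : ι) (hab : a ≠ b) (f : ι → ℂ) :
    ∑ k, f k = f a + f b + ∑ k ∈ (Finset.univ \ {a, b}), f k := by
  have h := Finset.sum_sdiff (f := f) (Finset.subset_univ ({a, b} : Finset ι))
  rw [← h, Finset.sum_pair hab]
  ring

noncomputable def hadM (a b : ι) : Matrix ι ι ℂ :=
  Matrix.of fun i j =>
    if i = a then (if j = a then rc else if j = b then rc else 0)
    else if i = b then (if j = a then rc else if j = b then -rc else 0)
    else if j = i then 1 else 0

set_option maxRecDepth 8000 in
lemma hadM_mem (a b : ι) (hab : a ≠ b) : hadM a b ∈ Matrix.unitaryGroup ι ℂ := by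
  rw [Matrix.mem_unitaryGroup_iff]
  ext i j
  rw [Matrix.mul_apply]
  rw [sum_split a b hab]
  have hcompl : ∑ k ∈ (Finset.univ \ {a, b}), hadM a b i k * star (hadM a b) k j
      = if (i = j ∧ ¬ i = a ∧ ¬ i = b) then 1 else 0 := by
    have hterm : ∀ k ∈ (Finset.univ \ {a, b}), hadM a b i k * star (hadM a b) k j
        = if (k = i ∧ k = j ∧ ¬ i = a ∧ ¬ i = b) then 1 else 0 := by
      intro k hk
      simp only [Finset.mem_sdiff, Finset.mem_insert, Finset.mem_singleton, not_or] at hk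
      obtain ⟨-, hka, hkb⟩ := hk
      rw [Matrix.star_apply, hadM]
      by_cases hia : i = a <;> by_cases hib : i = b <;> by_cases hja : j = a <;>
        by_cases hjb : j = b <;> by_cases hki : k = i <;> by_cases hkj : k = j <;>
        simp_all [star_rc, Complex.star_def]
    rw [Finset.sum_congr rfl hterm]
    by_cases hia : i = a
    · rw [Finset.sum_eq_zero (fun k _ => by simp [hia])]
      simp [hia]
    · by_cases hib : i = b
      · rw [Finset.sum_eq_zero (fun k _ => by simp [hib])]
        simp [hib]
      · by_cases hij : i = j
        · subst hij
          simp only [hia, hib, not_false_iff, and_self, and_true]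
          rw [Finset.sum_ite_eq' (Finset.univ \ {a, b} : Finset ι) i (fun _ => (1:ℂ))]
          simp [hia, hib]
        · rw [Finset.sum_eq_zero (fun k _ => by
            have : ¬ (k = i ∧ k = j ∧ ¬ i = a ∧ ¬ i = b) := by
              rintro ⟨h1, h2, -⟩; exact hij (h1 ▸ h2)
            simp [this])]
          simp [hij]
  rw [hcompl]
  clear hcompl
  have h2 := rc_mul_rc
  simp only [hadM, Matrix.star_apply, Matrix.of_apply, Matrix.one_apply,
    apply_ite (star : ℂ → ℂ), star_rc, star_zero, star_one, star_neg]
  split_ifs <;> subst_vars <;> simp_all <;>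
    first
      | linear_combination 2*h2
      | linear_combination h2
      | linear_combination -h2
      | linear_combination 2*rc*h2
      | linear_combination -2*rc*h2
      | norm_num

noncomputable def phaseD (a : ι) : ι → ℂ := fun x => if x = a then Complex.I else 1

lemma phaseV_mem (a : ι) : Matrix.diagonal (phaseD a) ∈ Matrix.unitaryGroup ι ℂ := by
  rw [Matrix.mem_unitaryGroup_iff]
  have hst : star (Matrix.diagonal (phaseD a)) = Matrix.diagonal (star (phaseD a)) :=
    Matrix.diagonal_conjTranspose _
  rw [hst, Matrix.diagonal_mul_diagonal]
  have : (fun i => phaseD a i * star (phaseD a) i) = fun _ => (1:ℂ) := by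
    funext x
    simp only [Pi.star_apply, phaseD]
    by_cases hx : x = a <;> simp [hx, Complex.star_def, Complex.conj_I,
      mul_neg, Complex.I_mul_I]
  rw [this, Matrix.diagonal_one]

variable (μ : Measure (Matrix.unitaryGroup ι ℂ)) [IsProbabilityMeasure μ] (j₀ : ι)

/-- The quartic monomial. -/
noncomputable def mono (i j k l : ι) (U : Matrix.unitaryGroup ι ℂ) : ℂ :=
  (U : Matrix ι ι ℂ) i j₀ * star ((U : Matrix ι ι ℂ) j j₀) *
  ((U : Matrix ι ι ℂ) k j₀ * star ((U : Matrix ι ι ℂ) l j₀))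

lemma meas_mono (i j k l : ι) : Measurable (mono j₀ i j k l) := by
  exact ((meas_entry i j₀).mul (continuous_star.measurable.comp (meas_entry j j₀))).mul
    ((meas_entry k j₀).mul (continuous_star.measurable.comp (meas_entry l j₀)))

lemma integrable_mono (i j k l : ι) : Integrable (mono j₀ i j k l) μ := by
  refine (integrable_const (1:ℝ)).mono' (meas_mono j₀ i j k l).aestronglyMeasurable ?_
  refine Filter.Eventually.of_forall fun U => ?_
  simp only [mono, norm_mul, norm_star]
  exact mul_le_one₀ (mul_le_one₀ (entry_norm_le U i j₀) (norm_nonneg _) (entry_norm_le U j j₀))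
    (by positivity) (mul_le_one₀ (entry_norm_le U k j₀) (norm_nonneg _) (entry_norm_le U l j₀))

/-- The fourth moment. -/
noncomputable def Mom (i j k l : ι) : ℂ := ∫ U, mono j₀ i j k l U ∂μ

variable (hμ : ∀ V : Matrix.unitaryGroup ι ℂ, Measure.map (fun U => V * U) μ = μ)

lemma meas_mulV (V : Matrix.unitaryGroup ι ℂ) :
    Measurable (fun U : Matrix.unitaryGroup ι ℂ => V * U) := by
  apply Measurable.subtype_mk
  show Measurable fun U : Matrix.unitaryGroup ι ℂ => (V : Matrix ι ι ℂ) * (U : Matrix ι ι ℂ)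
  apply measurable_pi_lambda
  intro i
  apply measurable_pi_lambda
  intro j
  show Measurable fun U : Matrix.unitaryGroup ι ℂ => ∑ k, (V : Matrix ι ι ℂ) i k * (U : Matrix ι ι ℂ) k j
  exact Finset.measurable_sum _ fun k _ => (meas_entry k j).const_mul _
include hμ

lemma integral_leftmul_inv (V : Matrix.unitaryGroup ι ℂ) (f : Matrix.unitaryGroup ι ℂ → ℂ)
    (hf : Measurable f) :
    ∫ U, f (V * U) ∂μ = ∫ U, f U ∂μ := by
  have h1 : AEStronglyMeasurable f (Measure.map (fun U => V * U) μ) := by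
    rw [hμ V]; exact hf.aestronglyMeasurable
  rw [← integral_map (meas_mulV V).aemeasurable h1, hμ V]

omit [IsProbabilityMeasure μ] hμ in
lemma mulV_entry (V U : Matrix.unitaryGroup ι ℂ) (i j : ι) :
    ((V * U : Matrix.unitaryGroup ι ℂ) : Matrix ι ι ℂ) i j
      = ∑ k, (V : Matrix ι ι ℂ) i k * (U : Matrix ι ι ℂ) k j := by
  rfl

omit [IsProbabilityMeasure μ] hμ in
lemma mono_phase (a i j k l : ι) (U : Matrix.unitaryGroup ι ℂ) :
    mono j₀ i j k l ((⟨Matrix.diagonal (phaseD a), phaseV_mem a⟩ : Matrix.unitaryGroup ι ℂ) * U)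
      = (phaseD a i * star (phaseD a j) * (phaseD a k * star (phaseD a l))) *
        mono j₀ i j k l U := by
  have hc : ∀ x : ι,
      (((⟨Matrix.diagonal (phaseD a), phaseV_mem a⟩ : Matrix.unitaryGroup ι ℂ) * U :
        Matrix.unitaryGroup ι ℂ) : Matrix ι ι ℂ) x j₀ = phaseD a x * (U : Matrix ι ι ℂ) x j₀ := by
    intro x
    show (Matrix.diagonal (phaseD a) * (U : Matrix ι ι ℂ)) x j₀ = _
    rw [Matrix.diagonal_mul]
  simp only [mono, hc, star_mul']
  ring

lemma Mom_phase_vanish (i j k l a : ι)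
    (h : ((if i = a then 1 else 0) + (if k = a then 1 else 0) : ℤ) ≠
         ((if j = a then 1 else 0) + (if l = a then 1 else 0))) :
    Mom μ j₀ i j k l = 0 := by
  set w : ℂ := phaseD a i * star (phaseD a j) * (phaseD a k * star (phaseD a l)) with hw
  have key : w * Mom μ j₀ i j k l = Mom μ j₀ i j k l := by
    rw [Mom, ← integral_const_mul]
    calc ∫ U, w * mono j₀ i j k l U ∂μ
        = ∫ U, mono j₀ i j k l
            ((⟨Matrix.diagonal (phaseD a), phaseV_mem a⟩ : Matrix.unitaryGroup ι ℂ) * U) ∂μ := by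
          refine integral_congr_ae (Filter.Eventually.of_forall fun U => ?_)
          simp only
          rw [mono_phase]
      _ = Mom μ j₀ i j k l :=
          integral_leftmul_inv μ hμ _ _ (meas_mono j₀ i j k l)
  have hw1 : w ≠ 1 := by
    by_cases hi : i = a <;> by_cases hj : j = a <;> by_cases hk : k = a <;>
      by_cases hl : l = a <;>
      simp only [hi, hj, hk, hl, if_pos, if_neg, phaseD, hw] at h ⊢ <;>
      first
        | exact absurd rfl h
        | norm_num [Complex.star_def, Complex.conj_I, Complex.ext_iff]
  have h0 : (w - 1) * Mom μ j₀ i j k l = 0 := by linear_combination key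
  rcases mul_eq_zero.1 h0 with h1 | h1
  · exact absurd (sub_eq_zero.mp h1) hw1
  · exact h1

omit [IsProbabilityMeasure μ] hμ in
lemma Mom_congr (i j k l i' j' k' l' : ι)
    (h : ∀ U, mono j₀ i j k l U = mono j₀ i' j' k' l' U) :
    Mom μ j₀ i j k l = Mom μ j₀ i' j' k' l' :=
  integral_congr_ae (Filter.Eventually.of_forall h)

omit [IsProbabilityMeasure μ] hμ in
lemma had_entry (a b : ι) (hab : a ≠ b) (U : Matrix.unitaryGroup ι ℂ) :
    (((⟨hadM a b, hadM_mem a b hab⟩ : Matrix.unitaryGroup ι ℂ) * U :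
      Matrix.unitaryGroup ι ℂ) : Matrix ι ι ℂ) a j₀
      = rc * ((U : Matrix ι ι ℂ) a j₀ + (U : Matrix ι ι ℂ) b j₀) := by
  show (hadM a b * (U : Matrix ι ι ℂ)) a j₀ = _
  rw [Matrix.mul_apply, sum_split a b hab]
  rw [Finset.sum_eq_zero (fun k hk => by
    simp only [Finset.mem_sdiff, Finset.mem_insert, Finset.mem_singleton, not_or] at hk
    obtain ⟨-, hka, hkb⟩ := hk
    simp [hadM, hka, hkb])]
  simp [hadM, hab]
  ring

lemma had_rel (a b : ι) (hab : a ≠ b) :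
    4 * Mom μ j₀ a a a a = Mom μ j₀ a a a a + Mom μ j₀ b b b b + 4 * Mom μ j₀ a a b b := by
  classical
  set s : Finset (ι × ι × ι × ι) :=
    ({a,b} : Finset ι) ×ˢ (({a,b} : Finset ι) ×ˢ (({a,b} : Finset ι) ×ˢ ({a,b} : Finset ι)))
    with hs
  set V : Matrix.unitaryGroup ι ℂ := ⟨hadM a b, hadM_mem a b hab⟩ with hV
  have expand : ∀ U : Matrix.unitaryGroup ι ℂ,
      mono j₀ a a a a (V * U) =
        4⁻¹ * ∑ p ∈ s, mono j₀ p.1 p.2.1 p.2.2.1 p.2.2.2 U := by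
    intro U
    have hE := had_entry j₀ a b hab U
    rw [hs]
    simp only [Finset.sum_product, Finset.sum_pair hab]
    set x := (U : Matrix ι ι ℂ) a j₀
    set y := (U : Matrix ι ι ℂ) b j₀
    have h2 := rc_mul_rc
    simp only [mono, hV] at hE ⊢
    rw [hE]
    simp only [star_mul', star_add, star_rc]
    linear_combination (rc * rc + 2⁻¹) * ((x + y) * (star x + star y))^2 * h2
  have step1 : Mom μ j₀ a a a a = 4⁻¹ * ∑ p ∈ s, Mom μ j₀ p.1 p.2.1 p.2.2.1 p.2.2.2 := by
    conv_lhs => rw [Mom, ← integral_leftmul_inv μ hμ V _ (meas_mono j₀ a a a a)]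
    rw [show (fun U => mono j₀ a a a a (V * U))
        = fun U => 4⁻¹ * ∑ p ∈ s, mono j₀ p.1 p.2.1 p.2.2.1 p.2.2.2 U from funext expand]
    rw [integral_const_mul, integral_finset_sum _
      (fun p _ => integrable_mono μ j₀ p.1 p.2.1 p.2.2.1 p.2.2.2)]
    rfl
  have hz : ∀ i j k l : ι,
      ((if i = a then 1 else 0) + (if k = a then 1 else 0) : ℤ) ≠
        ((if j = a then 1 else 0) + (if l = a then 1 else 0)) → Mom μ j₀ i j k l = 0 :=
    fun i j k l h => Mom_phase_vanish μ j₀ hμ i j k l a h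
  have e1 : Mom μ j₀ a b b a = Mom μ j₀ a a b b :=
    Mom_congr μ j₀ _ _ _ _ _ _ _ _ (fun U => by simp only [mono]; ring)
  have e2 : Mom μ j₀ b a a b = Mom μ j₀ a a b b :=
    Mom_congr μ j₀ _ _ _ _ _ _ _ _ (fun U => by simp only [mono]; ring)
  have e3 : Mom μ j₀ b b a a = Mom μ j₀ a a b b :=
    Mom_congr μ j₀ _ _ _ _ _ _ _ _ (fun U => by simp only [mono]; ring)
  rw [hs] at step1
  simp only [Finset.sum_product, Finset.sum_pair hab] at step1
  rw [hz a a a b (by simp [hab, hab.symm]), hz a a b a (by simp [hab, hab.symm]),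
    hz a b a a (by simp [hab, hab.symm]), hz a b a b (by simp [hab, hab.symm]),
    hz b a a a (by simp [hab, hab.symm]), hz b a b a (by simp [hab, hab.symm]),
    hz b a b b (by simp [hab, hab.symm]),
    hz a b b b (by simp [hab, hab.symm]), hz b b a b (by simp [hab, hab.symm]),
    hz b b b a (by simp [hab, hab.symm]),
    e1, e2, e3] at step1
  linear_combination 4 * step1

lemma Mom_diag_eq (a b : ι) : Mom μ j₀ a a a a = Mom μ j₀ b b b b := by
  rcases eq_or_ne a b with h | h
  · rw [h]
  · have h1 := had_rel μ j₀ hμ a b h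
    have h2 := had_rel μ j₀ hμ b a h.symm
    have e3 : Mom μ j₀ b b a a = Mom μ j₀ a a b b :=
      Mom_congr μ j₀ _ _ _ _ _ _ _ _ (fun U => by simp only [mono]; ring)
    rw [e3] at h2
    linear_combination (h1 - h2) / 4

lemma Mom_off_eq (a b : ι) (hab : a ≠ b) :
    2 * Mom μ j₀ a a b b = Mom μ j₀ j₀ j₀ j₀ j₀ := by
  have h1 := had_rel μ j₀ hμ a b hab
  have h2 := Mom_diag_eq μ j₀ hμ a b
  have h3 := Mom_diag_eq μ j₀ hμ a j₀
  linear_combination -h1/2 + h2/2 + h3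

omit hμ in
lemma Mom_normalization : ∑ x : ι, ∑ y : ι, Mom μ j₀ x x y y = 1 := by
  have swap : ∑ x : ι, ∑ y : ι, Mom μ j₀ x x y y
      = ∫ U, ∑ x : ι, ∑ y : ι, mono j₀ x x y y U ∂μ := by
    rw [integral_finset_sum _ (fun x _ => integrable_finset_sum _
      (fun y _ => integrable_mono μ j₀ x x y y))]
    refine Finset.sum_congr rfl fun x _ => ?_
    rw [integral_finset_sum _ (fun y _ => integrable_mono μ j₀ x x y y)]
    rfl
  rw [swap]
  have hpt : ∀ U : Matrix.unitaryGroup ι ℂ,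
      ∑ x : ι, ∑ y : ι, mono j₀ x x y y U = 1 := by
    intro U
    have := col_sum_one U j₀
    calc ∑ x : ι, ∑ y : ι, mono j₀ x x y y U
        = (∑ x : ι, (U : Matrix ι ι ℂ) x j₀ * star ((U : Matrix ι ι ℂ) x j₀)) *
          (∑ y : ι, (U : Matrix ι ι ℂ) y j₀ * star ((U : Matrix ι ι ℂ) y j₀)) := by
          rw [Finset.sum_mul_sum]
          rfl
      _ = 1 := by rw [this, one_mul]
  simp only [hpt]
  simp

lemma Mom_diag_val :
    Mom μ j₀ j₀ j₀ j₀ j₀ = 2 / ((Fintype.card ι) * ((Fintype.card ι) + 1) : ℂ) := by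
  have hnorm := Mom_normalization μ j₀
  set d := Mom μ j₀ j₀ j₀ j₀ j₀ with hd
  have key : ∀ x : ι, ∑ y : ι, Mom μ j₀ x x y y = d + ((Fintype.card ι : ℂ) - 1) * (d / 2) := by
    intro x
    rw [← Finset.add_sum_erase _ _ (Finset.mem_univ x)]
    have : ∀ y ∈ Finset.univ.erase x, Mom μ j₀ x x y y = d / 2 := by
      intro y hy
      have hxy : x ≠ y := (Finset.ne_of_mem_erase hy).symm
      have := Mom_off_eq μ j₀ hμ x y hxy
      linear_combination this / 2
    rw [Finset.sum_congr rfl this, Finset.sum_const, Finset.card_erase_of_mem (Finset.mem_univ x),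
      Finset.card_univ, Mom_diag_eq μ j₀ hμ x j₀, nsmul_eq_mul]
    have hcard : (0:ℕ) < Fintype.card ι := Fintype.card_pos_iff.mpr ⟨j₀⟩
    have : ((Fintype.card ι - 1 : ℕ) : ℂ) = (Fintype.card ι : ℂ) - 1 := by
      push_cast [Nat.cast_sub hcard]
      ring
    rw [this]
  rw [Finset.sum_congr rfl (fun x _ => key x), Finset.sum_const, Finset.card_univ,
    nsmul_eq_mul] at hnorm
  have hcard : (0:ℕ) < Fintype.card ι := Fintype.card_pos_iff.mpr ⟨j₀⟩
  have hc0 : ((Fintype.card ι : ℂ)) ≠ 0 := by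
    exact_mod_cast Nat.cast_ne_zero.mpr hcard.ne'
  have hc1 : ((Fintype.card ι : ℂ)) + 1 ≠ 0 := by
    intro h
    have : ((Fintype.card ι : ℂ)) = -1 := by linear_combination h
    have : ((Fintype.card ι : ℝ)) = -1 := by exact_mod_cast congrArg Complex.re this
    nlinarith [Nat.cast_nonneg (α := ℝ) (Fintype.card ι)]
  field_simp
  linear_combination 2 * hnorm

lemma Mom_off_val (a b : ι) (hab : a ≠ b) :
    Mom μ j₀ a a b b = 1 / ((Fintype.card ι) * ((Fintype.card ι) + 1) : ℂ) := by
  have h1 := Mom_off_eq μ j₀ hμ a b hab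
  rw [Mom_diag_val μ j₀ hμ] at h1
  linear_combination h1 / 2

lemma Mom_diag_val' (a : ι) :
    Mom μ j₀ a a a a = 2 / ((Fintype.card ι) * ((Fintype.card ι) + 1) : ℂ) := by
  rw [Mom_diag_eq μ j₀ hμ a j₀, Mom_diag_val μ j₀ hμ]

end Aux

section Main
variable {Dv Dh : ℕ}

lemma pointwise_frob (hv : 0 < Dv) (hh : 0 < Dh)
    (U : Matrix.unitaryGroup (Fin Dv × Fin Dh) ℂ) :
    (frobNorm (trH (proj (fun i =>
        (U : Matrix (Fin Dv × Fin Dh) (Fin Dv × Fin Dh) ℂ) i (⟨0, hv⟩, ⟨0, hh⟩))) -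
      ((Dv : ℂ))⁻¹ • 1)) ^ 2
    = (∑ p : Fin Dv, ∑ v : Fin Dv, ∑ q : Fin Dh, ∑ q' : Fin Dh,
        mono (⟨0, hv⟩, ⟨0, hh⟩) (p,q) (v,q) (v,q') (p,q') U).re - 1 / Dv := by
  set j0 : Fin Dv × Fin Dh := (⟨0, hv⟩, ⟨0, hh⟩) with hj0
  set A : Matrix (Fin Dv) (Fin Dv) ℂ := trH (proj (fun i =>
      (U : Matrix (Fin Dv × Fin Dh) (Fin Dv × Fin Dh) ℂ) i j0)) - ((Dv : ℂ))⁻¹ • 1 with hA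
  have hDv0 : ((Dv:ℂ)) ≠ 0 := Nat.cast_ne_zero.mpr hv.ne'
  have hAapp : ∀ p v, A p v =
      (∑ q, (U : Matrix (Fin Dv × Fin Dh) (Fin Dv × Fin Dh) ℂ) (p,q) j0 *
        star ((U : Matrix (Fin Dv × Fin Dh) (Fin Dv × Fin Dh) ℂ) (v,q) j0))
      - ((Dv : ℂ))⁻¹ * (if p = v then 1 else 0) := by
    intro p v
    simp [hA, trH, proj, Matrix.sub_apply, Matrix.smul_apply, Matrix.one_apply, smul_eq_mul,
      mul_ite, mul_one, mul_zero]
  have h2 : ∀ z : ℂ, ‖z‖^2 = (z * star z).re := by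
    intro z
    rw [Complex.star_def, Complex.mul_conj']
    norm_cast
  have h1 : frobNorm A ^ 2 = ∑ p, ∑ v, ‖A p v‖^2 := by
    rw [frobNorm, Real.sq_sqrt (by positivity)]
  have h3 : ∑ p, ∑ v, ‖A p v‖^2 = (∑ p, ∑ v, A p v * star (A p v)).re := by
    rw [Complex.re_sum]
    refine Finset.sum_congr rfl fun p _ => ?_
    rw [Complex.re_sum]
    exact Finset.sum_congr rfl fun v _ => h2 _
  have trace1 : ∑ p : Fin Dv, ∑ q : Fin Dh,
      (U : Matrix (Fin Dv × Fin Dh) (Fin Dv × Fin Dh) ℂ) (p,q) j0 *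
        star ((U : Matrix (Fin Dv × Fin Dh) (Fin Dv × Fin Dh) ℂ) (p,q) j0) = 1 := by
    have h := col_sum_one U j0
    rw [Fintype.sum_prod_type] at h
    exact h
  have trace2 : ∑ p : Fin Dv, ∑ q : Fin Dh,
      star ((U : Matrix (Fin Dv × Fin Dh) (Fin Dv × Fin Dh) ℂ) (p,q) j0) *
        (U : Matrix (Fin Dv × Fin Dh) (Fin Dv × Fin Dh) ℂ) (p,q) j0 = 1 := by
    rw [← trace1]
    exact Finset.sum_congr rfl fun p _ => Finset.sum_congr rfl fun q _ => mul_comm _ _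
  have hstar : ∀ p v, star (A p v) =
      (∑ q', star ((U : Matrix (Fin Dv × Fin Dh) (Fin Dv × Fin Dh) ℂ) (p,q') j0) *
        (U : Matrix (Fin Dv × Fin Dh) (Fin Dv × Fin Dh) ℂ) (v,q') j0)
      - ((Dv : ℂ))⁻¹ * (if p = v then 1 else 0) := by
    intro p v
    rw [hAapp p v, star_sub, star_sum]
    congr 1
    · exact Finset.sum_congr rfl fun q _ => by rw [star_mul', star_star]
    · by_cases hpv : p = v <;>
        simp [hpv, Complex.star_def, map_inv₀, map_natCast]
  have hρσ : ∀ p v, (∑ q, (U : Matrix (Fin Dv × Fin Dh) (Fin Dv × Fin Dh) ℂ) (p,q) j0 *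
        star ((U : Matrix (Fin Dv × Fin Dh) (Fin Dv × Fin Dh) ℂ) (v,q) j0)) *
      (∑ q', star ((U : Matrix (Fin Dv × Fin Dh) (Fin Dv × Fin Dh) ℂ) (p,q') j0) *
        (U : Matrix (Fin Dv × Fin Dh) (Fin Dv × Fin Dh) ℂ) (v,q') j0)
      = ∑ q, ∑ q', mono j0 (p,q) (v,q) (v,q') (p,q') U := by
    intro p v
    rw [Finset.sum_mul_sum]
    exact Finset.sum_congr rfl fun q _ => Finset.sum_congr rfl fun q' _ => by
      simp only [mono]; ring
  have expand : ∀ p v, A p v * star (A p v)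
      = (∑ q, ∑ q', mono j0 (p,q) (v,q) (v,q') (p,q') U)
        - ((Dv : ℂ))⁻¹ * (if p = v then
            (∑ q, (U : Matrix (Fin Dv × Fin Dh) (Fin Dv × Fin Dh) ℂ) (p,q) j0 *
              star ((U : Matrix (Fin Dv × Fin Dh) (Fin Dv × Fin Dh) ℂ) (p,q) j0)) else 0)
        - ((Dv : ℂ))⁻¹ * (if p = v then
            (∑ q, star ((U : Matrix (Fin Dv × Fin Dh) (Fin Dv × Fin Dh) ℂ) (p,q) j0) *
              (U : Matrix (Fin Dv × Fin Dh) (Fin Dv × Fin Dh) ℂ) (p,q) j0) else 0)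
        + ((Dv : ℂ))⁻¹ * ((Dv : ℂ))⁻¹ * (if p = v then 1 else 0) := by
    intro p v
    rw [hstar p v, hAapp p v]
    by_cases hpv : p = v
    · subst hpv
      simp only [eq_self_iff_true, if_true]
      linear_combination hρσ p p
    · simp only [if_neg hpv]
      linear_combination hρσ p v
  have key : ∑ p, ∑ v, A p v * star (A p v)
      = (∑ p : Fin Dv, ∑ v : Fin Dv, ∑ q : Fin Dh, ∑ q' : Fin Dh,
          mono j0 (p,q) (v,q) (v,q') (p,q') U) - ((Dv : ℂ))⁻¹ := by
    rw [Finset.sum_congr rfl fun p _ => Finset.sum_congr rfl fun v _ => expand p v]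
    simp only [Finset.sum_add_distrib, Finset.sum_sub_distrib, mul_ite, mul_zero, mul_one,
      Finset.sum_ite_eq, Finset.mem_univ, if_true]
    rw [← Finset.mul_sum, ← Finset.mul_sum, trace1, trace2, Finset.sum_const,
      Finset.card_univ, Fintype.card_fin, nsmul_eq_mul]
    have hinv : (Dv : ℂ) * ((Dv : ℂ))⁻¹ = 1 := mul_inv_cancel₀ hDv0
    linear_combination ((Dv : ℂ))⁻¹ * hinv
  have hre : (((Dv:ℂ))⁻¹).re = 1 / (Dv:ℝ) := by
    rw [show ((Dv:ℂ))⁻¹ = ((((Dv:ℝ))⁻¹ : ℝ) : ℂ) by push_cast [Complex.ofReal_inv]; norm_num]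
    rw [Complex.ofReal_re, one_div]
  rw [h1, h3, key, Complex.sub_re, hre]

end Main

lemma Mom_sum_val (hv : 0 < Dv) (hh : 0 < Dh)
    (μ : Measure (Matrix.unitaryGroup (Fin Dv × Fin Dh) ℂ)) [IsProbabilityMeasure μ]
    (hμ : ∀ V : Matrix.unitaryGroup (Fin Dv × Fin Dh) ℂ,
      Measure.map (fun U => V * U) μ = μ) :
    ∑ p : Fin Dv, ∑ v : Fin Dv, ∑ q : Fin Dh, ∑ q' : Fin Dh,
      Mom μ (⟨0, hv⟩, ⟨0, hh⟩) (p,q) (v,q) (v,q') (p,q')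
    = ((Dv:ℂ) + Dh) / ((Dv:ℂ) * (Dh:ℂ) + 1) := by
  set j0 : Fin Dv × Fin Dh := (⟨0, hv⟩, ⟨0, hh⟩) with hj0
  set N : ℂ := (Fintype.card (Fin Dv × Fin Dh) : ℂ) with hN
  have hNcard : Fintype.card (Fin Dv × Fin Dh) = Dv * Dh := by simp
  have hNval : N = (Dv:ℂ) * Dh := by rw [hN, hNcard]; push_cast; ring
  have hN0 : N ≠ 0 := by
    rw [hN, hNcard]
    exact_mod_cast Nat.cast_ne_zero.mpr (Nat.mul_ne_zero hv.ne' hh.ne')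
  have hN10 : N + 1 ≠ 0 := by
    rw [hN, hNcard]
    have h : ((Dv * Dh + 1 : ℕ) : ℂ) = ((Dv * Dh : ℕ) : ℂ) + 1 := by push_cast; ring
    rw [← h]
    exact Nat.cast_ne_zero.mpr (Nat.succ_ne_zero _)
  have hDh1 : ((Dh - 1 : ℕ) : ℂ) = (Dh:ℂ) - 1 := by
    rw [Nat.cast_sub hh]
    norm_num
  have hDv1 : ((Dv - 1 : ℕ) : ℂ) = (Dv:ℂ) - 1 := by
    rw [Nat.cast_sub hv]
    norm_num
  have diag : ∀ (i : Fin Dv × Fin Dh), Mom μ j0 i i i i = 2 / (N * (N + 1)) :=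
    fun i => Mom_diag_val' μ j0 hμ i
  have off : ∀ (i k : Fin Dv × Fin Dh), i ≠ k → Mom μ j0 i i k k = 1 / (N * (N + 1)) :=
    fun i k h => Mom_off_val μ j0 hμ i k h
  have inner_diag : ∀ p : Fin Dv,
      ∑ q : Fin Dh, ∑ q' : Fin Dh, Mom μ j0 (p,q) (p,q) (p,q') (p,q')
      = (Dh:ℂ) * (2 / (N * (N + 1))) + (Dh:ℂ) * ((Dh:ℂ) - 1) * (1 / (N * (N + 1))) := by
    intro p
    have hq : ∀ q : Fin Dh, ∑ q' : Fin Dh, Mom μ j0 (p,q) (p,q) (p,q') (p,q')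
        = 2 / (N * (N + 1)) + ((Dh:ℂ) - 1) * (1 / (N * (N + 1))) := by
      intro q
      rw [← Finset.add_sum_erase _ _ (Finset.mem_univ q), diag (p,q)]
      congr 1
      rw [Finset.sum_congr rfl (fun q' hq' => off (p,q) (p,q')
        (fun hcon => (Finset.mem_erase.mp hq').1 ((congrArg Prod.snd hcon).symm)))]
      rw [Finset.sum_const, Finset.card_erase_of_mem (Finset.mem_univ q),
        Finset.card_univ, Fintype.card_fin, nsmul_eq_mul, hDh1]
    rw [Finset.sum_congr rfl (fun q _ => hq q), Finset.sum_const, Finset.card_univ,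
      Fintype.card_fin, nsmul_eq_mul]
    ring
  have inner_off : ∀ p v : Fin Dv, p ≠ v →
      ∑ q : Fin Dh, ∑ q' : Fin Dh, Mom μ j0 (p,q) (v,q) (v,q') (p,q')
      = (Dh:ℂ) * (1 / (N * (N + 1))) := by
    intro p v hpv
    have hq : ∀ q : Fin Dh, ∑ q' : Fin Dh, Mom μ j0 (p,q) (v,q) (v,q') (p,q')
        = 1 / (N * (N + 1)) := by
      intro q
      rw [← Finset.add_sum_erase _ _ (Finset.mem_univ q)]
      have hmain : Mom μ j0 (p,q) (v,q) (v,q) (p,q) = 1 / (N * (N + 1)) := by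
        rw [Mom_congr μ j0 (p,q) (v,q) (v,q) (p,q) (p,q) (p,q) (v,q) (v,q)
          (fun U => by simp only [mono]; ring)]
        exact off (p,q) (v,q) (fun hcon => hpv (congrArg Prod.fst hcon))
      rw [hmain, Finset.sum_eq_zero, add_zero]
      intro q' hq'
      have hq'q : q' ≠ q := (Finset.mem_erase.mp hq').1
      refine Mom_phase_vanish μ j0 hμ _ _ _ _ (p,q) ?_
      have c1 : ((p,q) : Fin Dv × Fin Dh) = (p,q) := rfl
      have c2 : ((v,q) : Fin Dv × Fin Dh) ≠ (p,q) := fun hcon => hpv (congrArg Prod.fst hcon).symm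
      have c3 : ((v,q') : Fin Dv × Fin Dh) ≠ (p,q) := fun hcon => hpv (congrArg Prod.fst hcon).symm
      have c4 : ((p,q') : Fin Dv × Fin Dh) ≠ (p,q) := fun hcon => hq'q (congrArg Prod.snd hcon)
      simp [c1, c2, c3, c4]
    rw [Finset.sum_congr rfl (fun q _ => hq q), Finset.sum_const, Finset.card_univ,
      Fintype.card_fin, nsmul_eq_mul]
  have outer : ∀ p : Fin Dv,
      ∑ v : Fin Dv, ∑ q : Fin Dh, ∑ q' : Fin Dh, Mom μ j0 (p,q) (v,q) (v,q') (p,q')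
      = ((Dh:ℂ) * (2 / (N * (N + 1))) + (Dh:ℂ) * ((Dh:ℂ) - 1) * (1 / (N * (N + 1))))
        + ((Dv:ℂ) - 1) * ((Dh:ℂ) * (1 / (N * (N + 1)))) := by
    intro p
    rw [← Finset.add_sum_erase _ _ (Finset.mem_univ p), inner_diag p]
    congr 1
    rw [Finset.sum_congr rfl (fun v hv' => inner_off p v
      (fun hcon => (Finset.mem_erase.mp hv').1 hcon.symm))]
    rw [Finset.sum_const, Finset.card_erase_of_mem (Finset.mem_univ p),
      Finset.card_univ, Fintype.card_fin, nsmul_eq_mul, hDv1]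
  rw [Finset.sum_congr rfl (fun p _ => outer p), Finset.sum_const, Finset.card_univ,
    Fintype.card_fin, nsmul_eq_mul]
  rw [show ((Dv:ℂ) * (Dh:ℂ) + 1) = N + 1 by rw [hNval]]
  field_simp
  linear_combination (-((Dv:ℂ) + (Dh:ℂ))) * hNval

/-- for a Haar-random unit vector `φ = U e₀` in `ℂ^{Dv} ⊗ ℂ^{Dh}`,
`E[‖Tr_h |φ⟩⟨φ| - I/Dv‖₂²] = (Dv + Dh)/(Dv Dh + 1) - 1/Dv`, and in particular this
expectation is at most `1/Dh`. -/
theorem haar_average_frobenius_distance_sq (Dv Dh : ℕ) (hv : 0 < Dv) (hh : 0 < Dh)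
    (μ : Measure (Matrix.unitaryGroup (Fin Dv × Fin Dh) ℂ)) [IsProbabilityMeasure μ]
    (hμ : ∀ V : Matrix.unitaryGroup (Fin Dv × Fin Dh) ℂ,
      Measure.map (fun U => V * U) μ = μ) :
    (∫ U : Matrix.unitaryGroup (Fin Dv × Fin Dh) ℂ,
        (frobNorm (trH (proj (fun i =>
            (U : Matrix (Fin Dv × Fin Dh) (Fin Dv × Fin Dh) ℂ) i (⟨0, hv⟩, ⟨0, hh⟩))) -
          ((Dv : ℂ))⁻¹ • 1)) ^ 2 ∂μ =
      ((Dv : ℝ) + Dh) / ((Dv : ℝ) * Dh + 1) - 1 / Dv) ∧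
    (∫ U : Matrix.unitaryGroup (Fin Dv × Fin Dh) ℂ,
        (frobNorm (trH (proj (fun i =>
            (U : Matrix (Fin Dv × Fin Dh) (Fin Dv × Fin Dh) ℂ) i (⟨0, hv⟩, ⟨0, hh⟩))) -
          ((Dv : ℂ))⁻¹ • 1)) ^ 2 ∂μ ≤ 1 / Dh) := by
  have hpt := pointwise_frob hv hh
  have hSint : Integrable (fun U : Matrix.unitaryGroup (Fin Dv × Fin Dh) ℂ =>
      ∑ p : Fin Dv, ∑ v : Fin Dv, ∑ q : Fin Dh, ∑ q' : Fin Dh,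
        mono (⟨0, hv⟩, ⟨0, hh⟩) (p,q) (v,q) (v,q') (p,q') U) μ :=
    integrable_finset_sum _ (fun p _ => integrable_finset_sum _ (fun v _ =>
      integrable_finset_sum _ (fun q _ => integrable_finset_sum _ (fun q' _ =>
        integrable_mono μ _ _ _ _ _))))
  haveI hfin : IsFiniteMeasure μ := by
    constructor
    rw [measure_univ]
    exact ENNReal.one_lt_top
  have hSre : Integrable (fun U : Matrix.unitaryGroup (Fin Dv × Fin Dh) ℂ =>
      (∑ p : Fin Dv, ∑ v : Fin Dv, ∑ q : Fin Dh, ∑ q' : Fin Dh,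
        mono (⟨0, hv⟩, ⟨0, hh⟩) (p,q) (v,q) (v,q') (p,q') U).re) μ := hSint.re
  have hre2 : ∫ U, (∑ p : Fin Dv, ∑ v : Fin Dv, ∑ q : Fin Dh, ∑ q' : Fin Dh,
        mono (⟨0, hv⟩, ⟨0, hh⟩) (p,q) (v,q) (v,q') (p,q') U).re ∂μ
      = (∫ U, (∑ p : Fin Dv, ∑ v : Fin Dv, ∑ q : Fin Dh, ∑ q' : Fin Dh,
        mono (⟨0, hv⟩, ⟨0, hh⟩) (p,q) (v,q) (v,q') (p,q') U) ∂μ).re := integral_re hSint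
  have hswap : ∫ U, (∑ p : Fin Dv, ∑ v : Fin Dv, ∑ q : Fin Dh, ∑ q' : Fin Dh,
        mono (⟨0, hv⟩, ⟨0, hh⟩) (p,q) (v,q) (v,q') (p,q') U) ∂μ
      = ∑ p : Fin Dv, ∑ v : Fin Dv, ∑ q : Fin Dh, ∑ q' : Fin Dh,
        Mom μ (⟨0, hv⟩, ⟨0, hh⟩) (p,q) (v,q) (v,q') (p,q') := by
    rw [integral_finset_sum _ (fun p _ => integrable_finset_sum _ (fun v _ =>
      integrable_finset_sum _ (fun q _ => integrable_finset_sum _ (fun q' _ =>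
        integrable_mono μ _ _ _ _ _))))]
    refine Finset.sum_congr rfl fun p _ => ?_
    rw [integral_finset_sum _ (fun v _ => integrable_finset_sum _ (fun q _ =>
      integrable_finset_sum _ (fun q' _ => integrable_mono μ _ _ _ _ _)))]
    refine Finset.sum_congr rfl fun v _ => ?_
    rw [integral_finset_sum _ (fun q _ =>
      integrable_finset_sum _ (fun q' _ => integrable_mono μ _ _ _ _ _))]
    refine Finset.sum_congr rfl fun q _ => ?_
    rw [integral_finset_sum _ (fun q' _ => integrable_mono μ _ _ _ _ _)]
    rfl
  have hval : ∫ U : Matrix.unitaryGroup (Fin Dv × Fin Dh) ℂ,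
      (frobNorm (trH (proj (fun i =>
          (U : Matrix (Fin Dv × Fin Dh) (Fin Dv × Fin Dh) ℂ) i (⟨0, hv⟩, ⟨0, hh⟩))) -
        ((Dv : ℂ))⁻¹ • 1)) ^ 2 ∂μ =
      ((Dv : ℝ) + Dh) / ((Dv : ℝ) * Dh + 1) - 1 / Dv := by
    calc ∫ U : Matrix.unitaryGroup (Fin Dv × Fin Dh) ℂ,
        (frobNorm (trH (proj (fun i =>
            (U : Matrix (Fin Dv × Fin Dh) (Fin Dv × Fin Dh) ℂ) i (⟨0, hv⟩, ⟨0, hh⟩))) -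
          ((Dv : ℂ))⁻¹ • 1)) ^ 2 ∂μ
        = ∫ U, ((∑ p : Fin Dv, ∑ v : Fin Dv, ∑ q : Fin Dh, ∑ q' : Fin Dh,
            mono (⟨0, hv⟩, ⟨0, hh⟩) (p,q) (v,q) (v,q') (p,q') U).re - 1 / (Dv:ℝ)) ∂μ :=
          integral_congr_ae (Filter.Eventually.of_forall fun U => hpt U)
      _ = (∫ U, (∑ p : Fin Dv, ∑ v : Fin Dv, ∑ q : Fin Dh, ∑ q' : Fin Dh,
            mono (⟨0, hv⟩, ⟨0, hh⟩) (p,q) (v,q) (v,q') (p,q') U) ∂μ).re - 1 / (Dv:ℝ) := by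
          rw [integral_sub hSre (integrable_const _), hre2, integral_const]
          simp
      _ = ((Dv : ℝ) + Dh) / ((Dv : ℝ) * Dh + 1) - 1 / Dv := by
          rw [hswap, Mom_sum_val hv hh μ hμ]
          rw [show ((Dv:ℂ) + Dh) / ((Dv:ℂ) * (Dh:ℂ) + 1)
              = ((((Dv:ℝ) + Dh) / ((Dv:ℝ) * Dh + 1) : ℝ) : ℂ) by push_cast; ring]
          rw [Complex.ofReal_re]
  refine ⟨hval, ?_⟩
  rw [hval]
  have h1 : (0:ℝ) < Dv := by exact_mod_cast hv
  have h2 : (0:ℝ) < Dh := by exact_mod_cast hh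
  have key : ((Dv:ℝ) + Dh) / ((Dv:ℝ) * Dh + 1) ≤ ((Dv:ℝ) + Dh) / ((Dv:ℝ) * Dh) :=
    div_le_div_of_nonneg_left (by positivity) (by positivity) (by linarith)
  have heq : ((Dv:ℝ) + Dh) / ((Dv:ℝ) * Dh) = 1 / Dv + 1 / Dh := by
    field_simp
    ring
  rw [heq] at key
  linarith
end
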